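/- For integers m ≥ 0 and n, k ≥ 1, one has x₁^m ш (x₀^n x₁^k) = Σ_{m₁+m₂=m, m_i ≥ 0} C(m₂+k-1, k-1) · 𝔅_{m₁+1}^{n} x₁^{m₂+k}, an identity of multisets of words, where a binomial coefficient c multiplying a multiset means the multiset repeated c times. -/

import Mathlib

/-- The shuffle product of two words, as a multiset of words. -/
def shuffle {X : Type*} : List X → List X → Multiset (List X)
  | u, [] => {u}
  | [], v => {v}
  | a :: u, b :: v =>
      (shuffle u (b :: v)).map (a :: ·) + (shuffle (a :: u) v).map (b :: ·)
termination_by u v => u.length + v.length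

/-- The two-letter alphabet `X = {x₀, x₁}`. -/
def x0 : Bool := false
def x1 : Bool := true

/-- `𝔅_r^m`: the multiset of all words `x₀^{m₁} x₁ x₀^{m₂} x₁ ⋯ x₁ x₀^{m_r}`
with `m₁ + ⋯ + m_r = m`, `m_i ≥ 0`. -/
def B (r m : ℕ) : Multiset (List Bool) :=
  (Finset.Nat.antidiagonalTuple r m).val.map fun f =>
    List.intercalate [x1] (List.ofFn fun i => List.replicate (f i) x0)

/-- `S w T`: the multiset of all concatenations `u ++ w ++ v` with `u ∈ S`, `v ∈ T`,
counted with multiplicity. -/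
def msConcat {X : Type*} (S : Multiset (List X)) (w : List X) (T : Multiset (List X)) :
    Multiset (List X) :=
  S.bind fun u => T.map fun v => u ++ w ++ v

lemma intercalate_cons_cons {α : Type*} (s a b : List α) (l : List (List α)) :
    List.intercalate s (a :: b :: l) = a ++ s ++ List.intercalate s (b :: l) := by
  simp [List.intercalate, List.append_assoc]
def B' : ℕ → ℕ → Multiset (List Bool)
  | 0, m => {List.replicate m x0}
  | r + 1, m => ∑ p ∈ Finset.HasAntidiagonal.antidiagonal m,
      (B' r p.2).map fun w => List.replicate p.1 x0 ++ x1 :: w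
lemma B_one (m : ℕ) : B 1 m = {List.replicate m x0} := by
  simp [B, Finset.Nat.antidiagonalTuple, Multiset.Nat.antidiagonalTuple,
    List.Nat.antidiagonalTuple_one, List.intercalate]
lemma sum_eq_bind {α β : Type*} (s : Finset α) (f : α → Multiset β) :
    ∑ p ∈ s, f p = s.val.bind f := by
  rfl
lemma intercalate_cons_of_ne_nil {α : Type*} (s a : List α) (L : List (List α)) (h : L ≠ []) :
    List.intercalate s (a :: L) = a ++ s ++ List.intercalate s L := by
  cases L with
  | nil => exact absurd rfl h
  | cons b l => exact intercalate_cons_cons s a b l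
lemma intercalate_cons_fin {r : ℕ} (a : ℕ) (x : Fin (r + 1) → ℕ) :
    List.intercalate [x1] (List.ofFn fun i => List.replicate ((Fin.cons a x : Fin (r + 2) → ℕ) i) x0) =
      List.replicate a x0 ++ x1 ::
        List.intercalate [x1] (List.ofFn fun i => List.replicate (x i) x0) := by
  rw [List.ofFn_succ, intercalate_cons_of_ne_nil _ _ _ (by simp)]
  simp [List.append_assoc]
lemma B_succ_succ (r m : ℕ) :
    B (r + 2) m = ∑ p ∈ Finset.HasAntidiagonal.antidiagonal m,
      (B (r + 1) p.2).map fun w => List.replicate p.1 x0 ++ x1 :: w := by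
  rw [sum_eq_bind]
  show Multiset.map _ (Multiset.ofList (List.Nat.antidiagonalTuple (r + 2) m)) = _
  rw [List.Nat.antidiagonalTuple, ← Multiset.coe_bind, Multiset.map_bind]
  show (Multiset.ofList (List.Nat.antidiagonal m)).bind _ = (Finset.HasAntidiagonal.antidiagonal m).val.bind _
  have hval : (Finset.HasAntidiagonal.antidiagonal m).val = (Multiset.ofList (List.Nat.antidiagonal m)) := rfl
  rw [hval]
  refine Multiset.bind_congr fun p _ => ?_
  rw [← Multiset.map_coe, Multiset.map_map, B, Multiset.map_map]
  exact Multiset.map_congr rfl fun x _ => intercalate_cons_fin p.1 x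
lemma B_eq (r m : ℕ) : B (r + 1) m = B' r m := by
  induction r generalizing m with
  | zero => rw [B_one]; rfl
  | succ r ih => rw [B_succ_succ, B']; simp [ih]
lemma map_finsetSum' {α β γ : Type*} (s : Finset α) (F : α → Multiset β) (g : β → γ) :
    (∑ a ∈ s, F a).map g = ∑ a ∈ s, (F a).map g :=
  map_sum (Multiset.mapAddMonoidHom g) F s
lemma B'_zero_right (r : ℕ) : B' r 0 = {List.replicate r x1} := by
  induction r with
  | zero => rfl
  | succ r ih => rw [B']; simp [ih, List.replicate_succ]
lemma B'_zero_succ (n : ℕ) : B' 0 (n + 1) = (B' 0 n).map (x0 :: ·) := by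
  simp [B', List.replicate_succ]
lemma B'_succ_succ (r n : ℕ) :
    B' (r + 1) (n + 1) =
      (B' r (n + 1)).map (x1 :: ·) + (B' (r + 1) n).map (x0 :: ·) := by
  rw [B', B', Finset.Nat.antidiagonal_succ, Finset.sum_cons, Finset.sum_map]
  simp only [Function.Embedding.coe_prodMap, Function.Embedding.coeFn_mk,
    Function.Embedding.refl_apply, Prod.map_fst, Prod.map_snd]
  rw [map_finsetSum']
  congr 1
  refine Finset.sum_congr rfl fun p _ => ?_
  simp [Multiset.map_map, List.replicate_succ, Function.comp]
lemma shuffle_nil_left {X : Type*} (v : List X) : shuffle [] v = {v} := by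
  cases v <;> simp [shuffle]
lemma shuffle_nil_right {X : Type*} (u : List X) : shuffle u [] = {u} := by
  simp [shuffle]
lemma shuffle_cons_cons {X : Type*} (a b : X) (u v : List X) :
    shuffle (a :: u) (b :: v) =
      (shuffle u (b :: v)).map (a :: ·) + (shuffle (a :: u) v).map (b :: ·) := by
  rw [shuffle]
lemma shuffle_replicate {X : Type*} (c : X) :
    ∀ a b : ℕ, shuffle (List.replicate a c) (List.replicate b c) =
      (a + b).choose a • {List.replicate (a + b) c} := by
  intro a
  induction a with
  | zero => intro b; simp [shuffle_nil_left]
  | succ a iha =>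
    intro b
    induction b with
    | zero => simp [shuffle_nil_right]
    | succ b ihb =>
      have step : shuffle (List.replicate (a + 1) c) (List.replicate (b + 1) c) =
          (shuffle (List.replicate a c) (List.replicate (b + 1) c)).map (c :: ·) +
            (shuffle (List.replicate (a + 1) c) (List.replicate b c)).map (c :: ·) :=
        shuffle_cons_cons c c _ _
      rw [step, iha (b + 1), ihb]
      rw [Multiset.map_nsmul, Multiset.map_nsmul]
      simp only [Multiset.map_singleton, ← List.replicate_succ]
      rw [show a + (b + 1) + 1 = a + 1 + (b + 1) by ring,
        show a + 1 + b + 1 = a + 1 + (b + 1) by ring, ← add_nsmul]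
      congr 1
      rw [show a + 1 + (b + 1) = (a + b + 1) + 1 by ring, Nat.choose_succ_succ (a + b + 1) a]
      congr 2 <;> omega
def F (m n k : ℕ) : Multiset (List Bool) :=
  ∑ p ∈ Finset.HasAntidiagonal.antidiagonal m,
    Nat.choose (p.2 + k - 1) (k - 1) •
      (B' p.1 n).map (fun w => w ++ List.replicate (p.2 + k) x1)
lemma F_succ_succ (m n k : ℕ) :
    F (m + 1) (n + 1) k = (F m (n + 1) k).map (x1 :: ·) + (F (m + 1) n k).map (x0 :: ·) := by
  rw [F, F, F, Finset.Nat.antidiagonal_succ (n := m), Finset.sum_cons, Finset.sum_cons,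
    Finset.sum_map, Finset.sum_map]
  simp only [Function.Embedding.coe_prodMap, Function.Embedding.coeFn_mk,
    Function.Embedding.refl_apply, Prod.map_fst, Prod.map_snd, B'_zero_succ, B'_succ_succ,
    Multiset.map_add, smul_add, Multiset.map_map, Function.comp, List.cons_append,
    Multiset.map_nsmul, map_finsetSum', Finset.sum_add_distrib]
  abel
lemma F_zero_left (n k : ℕ) :
    F 0 n k = {List.replicate n x0 ++ List.replicate k x1} := by
  rw [F, Finset.Nat.antidiagonal_zero, Finset.sum_singleton]
  simp [B']
lemma F_zero_right (m K : ℕ) :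
    F m 0 (K + 1) = (m + K + 1).choose (K + 1) • {List.replicate (m + K + 1) x1} := by
  rw [F]
  have : ∀ p ∈ Finset.HasAntidiagonal.antidiagonal m,
      (p.2 + (K + 1) - 1).choose (K + 1 - 1) •
          (B' p.1 0).map (fun w => w ++ List.replicate (p.2 + (K + 1)) x1) =
        (p.2 + K).choose K • {List.replicate (m + K + 1) x1} := by
    intro p hp
    have hpm : p.1 + p.2 = m := Finset.HasAntidiagonal.mem_antidiagonal.mp hp
    rw [B'_zero_right, Multiset.map_singleton, ← List.replicate_add]
    have h1 : p.2 + (K + 1) - 1 = p.2 + K := by omega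
    have h2 : K + 1 - 1 = K := rfl
    have h3 : p.1 + (p.2 + (K + 1)) = m + K + 1 := by omega
    rw [h1, h2, h3]
  rw [Finset.sum_congr rfl this, ← Finset.sum_smul]
  congr 1
  rw [Finset.Nat.sum_antidiagonal_eq_sum_range_succ_mk]
  have := Finset.sum_range_reflect (fun i => (i + K).choose K) (m + 1)
  simp only [Nat.add_sub_cancel] at this ⊢
  rw [show m.succ = m + 1 from rfl, this, Nat.sum_range_add_choose]
lemma key (K : ℕ) : ∀ m n : ℕ,
    shuffle (List.replicate m x1) (List.replicate n x0 ++ List.replicate (K + 1) x1) =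
      F m n (K + 1) := by
  intro m
  induction m with
  | zero => intro n; simp [shuffle_nil_left, F_zero_left]
  | succ m ihm =>
    intro n
    induction n with
    | zero =>
      rw [List.replicate_zero, List.nil_append, shuffle_replicate, F_zero_right]
      congr 1
      exact Nat.choose_symm_add
    | succ n ihn =>
      have step : shuffle (List.replicate (m + 1) x1)
            (List.replicate (n + 1) x0 ++ List.replicate (K + 1) x1) =
          (shuffle (List.replicate m x1)
            (List.replicate (n + 1) x0 ++ List.replicate (K + 1) x1)).map (x1 :: ·) +
          (shuffle (List.replicate (m + 1) x1)
            (List.replicate n x0 ++ List.replicate (K + 1) x1)).map (x0 :: ·) :=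
        shuffle_cons_cons x1 x0 _ _
      rw [step, ihm (n + 1), ihn, F_succ_succ]

theorem shuffle_x1_pow_x0_pow_x1_pow (m n k : ℕ) (hn : 1 ≤ n) (hk : 1 ≤ k) :
    shuffle (List.replicate m x1) (List.replicate n x0 ++ List.replicate k x1) =
      ∑ p ∈ Finset.HasAntidiagonal.antidiagonal m,
        Nat.choose (p.2 + k - 1) (k - 1) •
          (B (p.1 + 1) n).map (fun w => w ++ List.replicate (p.2 + k) x1) := by
  obtain ⟨K, rfl⟩ : ∃ K, k = K + 1 := ⟨k - 1, by omega⟩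
  rw [key K m n, F]
  exact Finset.sum_congr rfl fun p _ => by rw [B_eq]
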